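/- Suppose for each dimension n ≤ N two filtered complexes K and L have persistence diagrams PD_n(K), PD_n(L) of equal (finite) cardinality, and fix bijections π_n between them. If all Betti curves are given by β_n(K, r) = Σ_{(b,d)∈PD_n(K)} 𝟙_{[b,d)}(r) and χ(K_r) = Σ_{n=0}^{N} (−1)^n β_n(K, r), then ‖χ(K_·) − χ(L_·)‖₁ ≤ 2 Σ_{n=0}^{N} Σ_{(b,d)∈PD_n(K)} ‖(b,d) − π_n(b,d)‖_∞, provided no matched pair (b_K,d_K), (b_L,d_L) satisfies d_K ≤ b_L or d_L ≤ b_K (i.e., matched intervals always overlap or are nested). -/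

import Mathlib

open MeasureTheory Set


lemma ind_int (a b : ℝ) : Integrable (indicator (Ico a b) (fun _ => (1:ℝ))) := by
  rw [integrable_indicator_iff measurableSet_Ico]
  refine integrableOn_const ?_ (by simp)
  simp [Real.volume_Ico]

lemma ind_integral (a b : ℝ) (h : a ≤ b) :
    ∫ r, indicator (Ico a b) (fun _ => (1:ℝ)) r = b - a := by
  rw [integral_indicator measurableSet_Ico]
  simp [Real.volume_Ico, ENNReal.toReal_ofReal (sub_nonneg.2 h), h]

lemma pw (a b c d r : ℝ) :
    |indicator (Ico a b) (fun _ => (1:ℝ)) r - indicator (Ico c d) (fun _ => (1:ℝ)) r| ≤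
      indicator (Ico (min a c) (max a c)) (fun _ => (1:ℝ)) r +
      indicator (Ico (min b d) (max b d)) (fun _ => (1:ℝ)) r := by
  simp only [indicator_apply, mem_Ico, le_min_iff, min_le_iff, le_max_iff, lt_min_iff,
    min_lt_iff, lt_max_iff, max_lt_iff]
  split_ifs <;> (try push_neg at *) <;> norm_num <;>
    first
      | linarith
      | (exfalso; rcases le_total a c with h|h <;> rcases le_total b d with h'|h' <;>
          simp_all <;> linarith)

/-- Slice-wise stability of the Euler Characteristic Curve: if for each dimension `n ≤ N`
the persistence diagrams of `K` and `L` are matched by a bijection (here encoded by a common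
index type `Fin (k n)`), the Betti curves are sums of indicators `𝟙_{[b,d)}`, the Euler
curves are the alternating sums of Betti curves, and no matched pair of intervals is disjoint
(neither `d_K ≤ b_L` nor `d_L ≤ b_K`), then the `L¹` distance of the Euler curves is at most
twice the total `ℓ∞` matching cost. -/
theorem stmt_16 (N : ℕ) (k : ℕ → ℕ) (PK PL : ∀ n, Fin (k n) → ℝ × ℝ)
    (hK : ∀ n i, (PK n i).1 ≤ (PK n i).2) (hL : ∀ n i, (PL n i).1 ≤ (PL n i).2)
    (hoverlap : ∀ n (i : Fin (k n)),
      ¬((PK n i).2 ≤ (PL n i).1) ∧ ¬((PL n i).2 ≤ (PK n i).1)) :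
    (∫ r : ℝ, |(∑ n ∈ Finset.range (N + 1), (-1 : ℝ) ^ n *
          ∑ i, indicator (Ico (PK n i).1 (PK n i).2) (fun _ => (1 : ℝ)) r) -
        ∑ n ∈ Finset.range (N + 1), (-1 : ℝ) ^ n *
          ∑ i, indicator (Ico (PL n i).1 (PL n i).2) (fun _ => (1 : ℝ)) r|) ≤
      2 * ∑ n ∈ Finset.range (N + 1), ∑ i,
        max |(PK n i).1 - (PL n i).1| |(PK n i).2 - (PL n i).2| := by
  set G : ℝ → ℝ := fun r => ∑ n ∈ Finset.range (N + 1), ∑ i : Fin (k n),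
      (indicator (Ico (min (PK n i).1 (PL n i).1) (max (PK n i).1 (PL n i).1))
        (fun _ => (1:ℝ)) r +
       indicator (Ico (min (PK n i).2 (PL n i).2) (max (PK n i).2 (PL n i).2))
        (fun _ => (1:ℝ)) r) with hG
  have hGint : Integrable G := by
    apply integrable_finset_sum
    intro n _
    apply integrable_finset_sum
    intro i _
    exact (ind_int _ _).add (ind_int _ _)
  have hFint : Integrable (fun r : ℝ =>
      |(∑ n ∈ Finset.range (N + 1), (-1 : ℝ) ^ n *
          ∑ i, indicator (Ico (PK n i).1 (PK n i).2) (fun _ => (1 : ℝ)) r) -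
        ∑ n ∈ Finset.range (N + 1), (-1 : ℝ) ^ n *
          ∑ i, indicator (Ico (PL n i).1 (PL n i).2) (fun _ => (1 : ℝ)) r|) := by
    apply Integrable.abs
    apply Integrable.sub <;>
    · apply integrable_finset_sum
      intro n _
      exact (integrable_finset_sum _ (fun i _ => ind_int _ _)).const_mul _
  have key : ∀ r : ℝ,
      |(∑ n ∈ Finset.range (N + 1), (-1 : ℝ) ^ n *
          ∑ i, indicator (Ico (PK n i).1 (PK n i).2) (fun _ => (1 : ℝ)) r) -
        ∑ n ∈ Finset.range (N + 1), (-1 : ℝ) ^ n *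
          ∑ i, indicator (Ico (PL n i).1 (PL n i).2) (fun _ => (1 : ℝ)) r| ≤ G r := by
    intro r
    rw [hG, ← Finset.sum_sub_distrib]
    refine le_trans (Finset.abs_sum_le_sum_abs _ _) (Finset.sum_le_sum fun n _ => ?_)
    rw [← mul_sub, abs_mul, abs_pow, abs_neg, abs_one, one_pow, one_mul,
      ← Finset.sum_sub_distrib]
    exact le_trans (Finset.abs_sum_le_sum_abs _ _)
      (Finset.sum_le_sum fun i _ => pw _ _ _ _ r)
  have hGval : ∫ r, G r = ∑ n ∈ Finset.range (N + 1), ∑ i : Fin (k n),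
      (|(PK n i).1 - (PL n i).1| + |(PK n i).2 - (PL n i).2|) := by
    have haux : ∀ n (i : Fin (k n)), Integrable (fun r : ℝ =>
        indicator (Ico (min (PK n i).1 (PL n i).1) (max (PK n i).1 (PL n i).1))
          (fun _ => (1:ℝ)) r +
        indicator (Ico (min (PK n i).2 (PL n i).2) (max (PK n i).2 (PL n i).2))
          (fun _ => (1:ℝ)) r) := fun n i => (ind_int _ _).add (ind_int _ _)
    simp only [hG]
    rw [integral_finset_sum _ (fun n _ => integrable_finset_sum _
      (fun (i : Fin (k n)) _ => haux n i))]
    refine Finset.sum_congr rfl fun n _ => ?_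
    rw [integral_finset_sum _ (fun (i : Fin (k n)) _ => haux n i)]
    refine Finset.sum_congr rfl fun i _ => ?_
    rw [integral_add (ind_int _ _) (ind_int _ _), ind_integral _ _ (min_le_max),
      ind_integral _ _ (min_le_max), max_sub_min_eq_abs, max_sub_min_eq_abs, abs_sub_comm (PL n i).1, abs_sub_comm (PL n i).2]
  calc (∫ r : ℝ, |(∑ n ∈ Finset.range (N + 1), (-1 : ℝ) ^ n *
          ∑ i, indicator (Ico (PK n i).1 (PK n i).2) (fun _ => (1 : ℝ)) r) -
        ∑ n ∈ Finset.range (N + 1), (-1 : ℝ) ^ n *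
          ∑ i, indicator (Ico (PL n i).1 (PL n i).2) (fun _ => (1 : ℝ)) r|)
      ≤ ∫ r, G r := integral_mono hFint hGint key
    _ = ∑ n ∈ Finset.range (N + 1), ∑ i : Fin (k n),
        (|(PK n i).1 - (PL n i).1| + |(PK n i).2 - (PL n i).2|) := hGval
    _ ≤ 2 * ∑ n ∈ Finset.range (N + 1), ∑ i,
        max |(PK n i).1 - (PL n i).1| |(PK n i).2 - (PL n i).2| := by
      rw [Finset.mul_sum]
      refine Finset.sum_le_sum fun n _ => ?_
      rw [Finset.mul_sum]
      refine Finset.sum_le_sum fun i _ => ?_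
      have h1 := le_max_left |(PK n i).1 - (PL n i).1| |(PK n i).2 - (PL n i).2|
      have h2 := le_max_right |(PK n i).1 - (PL n i).1| |(PK n i).2 - (PL n i).2|
      linarith
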